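/- Let N ≥ 2, let λ ∈ (−N, 0], and let Ω ⊂ ℝ^N be a smooth bounded domain containing the origin. Then there exist positive constants d₁, d₂ (depending only on N and λ) such that for every x ∈ Ω and every r > 0, d₁ · r^N · (|x| + r)^λ ≤ ∫_{B(x,r)} |y|^λ dy ≤ d₂ · r^N · (|x| + r)^λ. -/

import Mathlib

open MeasureTheory Real

open scoped ENNReal

noncomputable section

/-- A set `Ω ⊆ ℝ^N` is a C² domain: it is the sublevel set of a C² function whose
differential does not vanish on the boundary. -/
def IsC2Domain {N : ℕ} (Ω : Set (EuclideanSpace ℝ (Fin N))) : Prop :=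
  ∃ φ : EuclideanSpace ℝ (Fin N) → ℝ,
    ContDiff ℝ 2 φ ∧ Ω = {x | φ x < 0} ∧ ∀ x ∈ frontier Ω, fderiv ℝ φ x ≠ 0

/-- Distance to the boundary of `Ω`. -/
def bdist {N : ℕ} (Ω : Set (EuclideanSpace ℝ (Fin N))) (x : EuclideanSpace ℝ (Fin N)) : ℝ :=
  Metric.infDist x (frontier Ω)

open Set Metric MeasureTheory.Measure in
/-- Polar-coordinates formula for the Lebesgue integral of a function of the norm. -/
private lemma polar_lintegral {E : Type*} [NormedAddCommGroup E] [NormedSpace ℝ E]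
    [MeasurableSpace E] [BorelSpace E] [FiniteDimensional ℝ E] [Nontrivial E]
    (μ : Measure E) [μ.IsAddHaarMeasure] (g : ℝ → ℝ≥0∞) (hg : Measurable g) :
    ∫⁻ x, g ‖x‖ ∂μ = μ.toSphere univ *
      ∫⁻ y in Ioi (0:ℝ), ENNReal.ofReal (y ^ (Module.finrank ℝ E - 1)) * g y := by
  calc ∫⁻ x, g ‖x‖ ∂μ
      = ∫⁻ x, g ‖x‖ ∂(μ.restrict {(0:E)}ᶜ) := by rw [MeasureTheory.restrict_compl_singleton]
    _ = ∫⁻ x : ({(0:E)}ᶜ : Set E), g ‖x.1‖ ∂(μ.comap Subtype.val) :=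
        (lintegral_subtype_comap (measurableSet_singleton (0:E)).compl _).symm
    _ = ∫⁻ p : sphere (0:E) 1 × Ioi (0:ℝ), (g ∘ Subtype.val ∘ Prod.snd) p
          ∂(μ.toSphere.prod (.volumeIoiPow (Module.finrank ℝ E - 1))) :=
        Eq.trans (by congr 1; funext a; simp) (μ.measurePreserving_homeomorphUnitSphereProd.lintegral_comp_emb
          (Homeomorph.measurableEmbedding _) (g ∘ Subtype.val ∘ Prod.snd))
    _ = μ.toSphere univ *
          ∫⁻ y : Ioi (0:ℝ), g y ∂(Measure.volumeIoiPow (Module.finrank ℝ E - 1)) := by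
        rw [lintegral_prod _ ((hg.comp (measurable_subtype_coe.comp measurable_snd)).aemeasurable)]
        simp [lintegral_const, mul_comm]
    _ = _ := by
        rw [Measure.volumeIoiPow, lintegral_withDensity_eq_lintegral_mul _
          ((measurable_subtype_coe.pow_const _).ennreal_ofReal)
          (show Measurable fun y : Set.Ioi (0:ℝ) => g y.1 from hg.comp measurable_subtype_coe),
          ← lintegral_subtype_comap measurableSet_Ioi
            (fun y => ENNReal.ofReal (y ^ (Module.finrank ℝ E - 1)) * g y)]
        rfl

private lemma integrableOn_ball_rpow (N : ℕ) (hN : 1 ≤ N) {lam : ℝ} (hlam : -(N:ℝ) < lam)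
    (R : ℝ) :
    IntegrableOn (fun y : EuclideanSpace ℝ (Fin N) => ‖y‖ ^ lam)
      (Metric.ball (0 : EuclideanSpace ℝ (Fin N)) R) := by
  haveI : Nontrivial (EuclideanSpace ℝ (Fin N)) :=
    Module.nontrivial_of_finrank_pos (R := ℝ) (by rw [finrank_euclideanSpace_fin]; omega)
  have hmeas : Measurable fun y : EuclideanSpace ℝ (Fin N) => ‖y‖ ^ lam := by fun_prop
  refine ⟨hmeas.aestronglyMeasurable, ?_⟩
  rw [hasFiniteIntegral_iff_norm]
  have key : ∫⁻ y in Metric.ball (0 : EuclideanSpace ℝ (Fin N)) R,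
      ENNReal.ofReal ‖‖y‖ ^ lam‖ ∂volume
      = ∫⁻ x : EuclideanSpace ℝ (Fin N),
          (Set.Iio R).indicator (fun t => ENNReal.ofReal (t ^ lam)) ‖x‖ := by
    rw [← lintegral_indicator measurableSet_ball]
    refine lintegral_congr fun x => ?_
    by_cases hx : ‖x‖ < R
    · simp [Set.indicator_apply, hx, mem_ball_zero_iff,
        Real.norm_of_nonneg (Real.rpow_nonneg (norm_nonneg _) _)]
    · simp [Set.indicator_apply, hx, mem_ball_zero_iff]
  rw [key, polar_lintegral volume _ (Measurable.indicator (by fun_prop) measurableSet_Iio)]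
  refine ENNReal.mul_lt_top (measure_lt_top _ _) ?_
  have h2 : ∫⁻ y in Set.Ioi (0:ℝ),
      ENNReal.ofReal (y ^ (Module.finrank ℝ (EuclideanSpace ℝ (Fin N)) - 1)) *
        (Set.Iio R).indicator (fun t => ENNReal.ofReal (t ^ lam)) y
      = ∫⁻ y in Set.Ioo (0:ℝ) R, ENNReal.ofReal (y ^ ((N:ℝ) - 1 + lam)) := by
    have heq : ∀ y : ℝ, ENNReal.ofReal (y ^ (Module.finrank ℝ (EuclideanSpace ℝ (Fin N)) - 1)) *
        (Set.Iio R).indicator (fun t => ENNReal.ofReal (t ^ lam)) y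
        = (Set.Iio R).indicator
            (fun t => ENNReal.ofReal (t ^ (Module.finrank ℝ (EuclideanSpace ℝ (Fin N)) - 1)) *
              ENNReal.ofReal (t ^ lam)) y := by
      intro y
      by_cases hy : y ∈ Set.Iio R <;> simp [Set.indicator_apply, hy]
    simp_rw [heq]
    rw [lintegral_indicator measurableSet_Iio, Measure.restrict_restrict measurableSet_Iio,
      Set.inter_comm, Set.Ioi_inter_Iio]
    refine setLIntegral_congr_fun measurableSet_Ioo (fun y hy => ?_)
    rw [← ENNReal.ofReal_mul (pow_nonneg hy.1.le _)]
    congr 1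
    rw [← Real.rpow_natCast y (Module.finrank ℝ (EuclideanSpace ℝ (Fin N)) - 1),
      ← Real.rpow_add hy.1]
    congr 1
    rw [finrank_euclideanSpace_fin, Nat.cast_sub hN]
    push_cast
    ring
  rw [h2]
  have hInt : IntegrableOn (fun y : ℝ => y ^ ((N:ℝ) - 1 + lam)) (Set.Ioo 0 R) volume := by
    have := (intervalIntegral.intervalIntegrable_rpow' (a := 0) (b := R)
      (r := (N:ℝ) - 1 + lam) (by linarith)).1
    exact this.mono_set Set.Ioo_subset_Ioc_self
  exact hInt.setLIntegral_lt_top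

private lemma integral_ball_rpow (N : ℕ) (hN : 1 ≤ N) {lam : ℝ} (hlam : -(N:ℝ) < lam)
    {R : ℝ} (hR : 0 < R) :
    ∫ y in Metric.ball (0 : EuclideanSpace ℝ (Fin N)) R, ‖y‖ ^ lam
      = (N * (volume (Metric.ball (0 : EuclideanSpace ℝ (Fin N)) 1)).toReal / ((N:ℝ) + lam))
          * R ^ ((N:ℝ) + lam) := by
  haveI : Nontrivial (EuclideanSpace ℝ (Fin N)) :=
    Module.nontrivial_of_finrank_pos (R := ℝ) (by rw [finrank_euclideanSpace_fin]; omega)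
  have h1 : ∫ y in Metric.ball (0 : EuclideanSpace ℝ (Fin N)) R, ‖y‖ ^ lam
      = ∫ x : EuclideanSpace ℝ (Fin N), (Set.Iio R).indicator (fun t => t ^ lam) ‖x‖ := by
    rw [← integral_indicator measurableSet_ball]
    refine integral_congr_ae (Filter.Eventually.of_forall fun x => ?_)
    by_cases hx : ‖x‖ < R
    · simp [Set.indicator_apply, hx, mem_ball_zero_iff]
    · simp [Set.indicator_apply, hx, mem_ball_zero_iff]
  rw [h1, integral_fun_norm_addHaar volume ((Set.Iio R).indicator (fun t => t ^ lam))]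
  have h2 : ∫ y in Set.Ioi (0:ℝ),
      y ^ (Module.finrank ℝ (EuclideanSpace ℝ (Fin N)) - 1) •
        (Set.Iio R).indicator (fun t => t ^ lam) y
      = ∫ y in Set.Ioo (0:ℝ) R, y ^ ((N:ℝ) - 1 + lam) := by
    have heq : ∀ y : ℝ, y ^ (Module.finrank ℝ (EuclideanSpace ℝ (Fin N)) - 1) •
        (Set.Iio R).indicator (fun t => t ^ lam) y
        = (Set.Iio R).indicator
            (fun t => t ^ (Module.finrank ℝ (EuclideanSpace ℝ (Fin N)) - 1) * t ^ lam) y := by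
      intro y
      by_cases hy : y ∈ Set.Iio R <;> simp [Set.indicator_apply, hy]
    simp_rw [heq]
    rw [setIntegral_indicator measurableSet_Iio, Set.Ioi_inter_Iio]
    refine setIntegral_congr_fun measurableSet_Ioo fun y hy => ?_
    rw [← Real.rpow_natCast y (Module.finrank ℝ (EuclideanSpace ℝ (Fin N)) - 1),
      ← Real.rpow_add hy.1]
    congr 1
    rw [finrank_euclideanSpace_fin, Nat.cast_sub hN]
    push_cast
    ring
  rw [h2]
  have hNlam : (0:ℝ) < (N:ℝ) + lam := by linarith
  have h3 : ∫ y in Set.Ioo (0:ℝ) R, y ^ ((N:ℝ) - 1 + lam)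
      = R ^ ((N:ℝ) + lam) / ((N:ℝ) + lam) := by
    have hs : (N:ℝ) - 1 + lam + 1 = (N:ℝ) + lam := by ring
    rw [← integral_Ioc_eq_integral_Ioo, ← intervalIntegral.integral_of_le hR.le,
      integral_rpow (Or.inl (by linarith)), hs, Real.zero_rpow hNlam.ne']
    ring
  rw [h3, finrank_euclideanSpace_fin]
  simp only [nsmul_eq_mul, smul_eq_mul, measureReal_def]
  ring

theorem volume_estimate_weight_rpow
    (N : ℕ) (hN : 2 ≤ N) (lam : ℝ) (hlam₁ : -(N : ℝ) < lam) (hlam₂ : lam ≤ 0)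
    (Ω : Set (EuclideanSpace ℝ (Fin N))) (hΩo : IsOpen Ω) (hΩconn : IsConnected Ω)
    (hΩb : Bornology.IsBounded Ω) (hΩsm : IsC2Domain Ω)
    (h0 : (0 : EuclideanSpace ℝ (Fin N)) ∈ Ω) :
    ∃ d₁ d₂ : ℝ, 0 < d₁ ∧ 0 < d₂ ∧ ∀ x ∈ Ω, ∀ r : ℝ, 0 < r →
      d₁ * r ^ N * (‖x‖ + r) ^ lam ≤ (∫ y in Metric.ball x r, ‖y‖ ^ lam) ∧
      (∫ y in Metric.ball x r, ‖y‖ ^ lam) ≤ d₂ * r ^ N * (‖x‖ + r) ^ lam := by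
  have hN1 : 1 ≤ N := by omega
  haveI : Nontrivial (EuclideanSpace ℝ (Fin N)) :=
    Module.nontrivial_of_finrank_pos (R := ℝ) (by rw [finrank_euclideanSpace_fin]; omega)
  set v : ℝ := (volume (Metric.ball (0 : EuclideanSpace ℝ (Fin N)) 1)).toReal with hv
  have hv0 : 0 < v :=
    ENNReal.toReal_pos (Metric.measure_ball_pos volume _ one_pos).ne' measure_ball_lt_top.ne
  have hNlam : 0 < (N:ℝ) + lam := by linarith
  have hN0 : 0 < (N:ℝ) := by exact_mod_cast (by omega : 0 < N)
  set C : ℝ := N * v / ((N:ℝ) + lam) with hC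
  have hC0 : 0 < C := div_pos (mul_pos hN0 hv0) hNlam
  refine ⟨v, v * 3 ^ (-lam) + C * 3 ^ (N:ℝ) * 3 ^ (-lam), hv0, by positivity,
    fun x _hx r hr => ?_⟩
  have hxr : 0 < ‖x‖ + r := by positivity
  have hvol : (volume (Metric.ball x r)).toReal = r ^ N * v := by
    rw [Measure.addHaar_ball volume x hr.le, finrank_euclideanSpace_fin, ENNReal.toReal_mul,
      ENNReal.toReal_ofReal (by positivity)]
  have hsub : Metric.ball x r ⊆ Metric.ball (0 : EuclideanSpace ℝ (Fin N)) (‖x‖ + r) := by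
    intro y hy
    have h1 : dist y x < r := Metric.mem_ball.1 hy
    have h2 := norm_sub_norm_le y x
    rw [← dist_eq_norm] at h2
    rw [mem_ball_zero_iff]
    linarith
  have hInt : IntegrableOn (fun y : EuclideanSpace ℝ (Fin N) => ‖y‖ ^ lam) (Metric.ball x r) :=
    (integrableOn_ball_rpow N hN1 hlam₁ (‖x‖ + r)).mono_set hsub
  constructor
  · -- lower bound
    have hmono : ∫ y in Metric.ball x r, (‖x‖ + r) ^ lam ≤ ∫ y in Metric.ball x r, ‖y‖ ^ lam := by
      refine integral_mono_ae (integrableOn_const measure_ball_lt_top.ne) hInt ?_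
      have h0' : ∀ᵐ (y : EuclideanSpace ℝ (Fin N)) ∂volume, y ≠ 0 := by
        rw [ae_iff]
        simpa using measure_singleton (0 : EuclideanSpace ℝ (Fin N))
      filter_upwards [ae_restrict_mem measurableSet_ball, ae_restrict_of_ae h0'] with y hy hy0
      have hy1 : 0 < ‖y‖ := norm_pos_iff.2 hy0
      have hy2 : ‖y‖ ≤ ‖x‖ + r := le_of_lt (mem_ball_zero_iff.1 (hsub hy))
      exact Real.rpow_le_rpow_of_nonpos hy1 hy2 hlam₂
    calc v * r ^ N * (‖x‖ + r) ^ lam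
        = ∫ _y in Metric.ball x r, (‖x‖ + r) ^ lam := by
          rw [setIntegral_const, measureReal_def, hvol, smul_eq_mul]; ring
      _ ≤ _ := hmono
  · -- upper bound
    rcases le_or_gt (‖x‖) (2 * r) with hcase | hcase
    · -- near-origin case
      have h3r : (0:ℝ) < 3 * r := by linarith
      have hsub3 : Metric.ball x r ⊆ Metric.ball (0 : EuclideanSpace ℝ (Fin N)) (3 * r) := by
        intro y hy
        exact mem_ball_zero_iff.2 (lt_of_lt_of_le (mem_ball_zero_iff.1 (hsub hy)) (by linarith))
      have step1 : ∫ y in Metric.ball x r, ‖y‖ ^ lam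
          ≤ ∫ y in Metric.ball (0 : EuclideanSpace ℝ (Fin N)) (3 * r), ‖y‖ ^ lam :=
        setIntegral_mono_set (integrableOn_ball_rpow N hN1 hlam₁ (3 * r))
          (Filter.Eventually.of_forall fun y => Real.rpow_nonneg (norm_nonneg _) _)
          (HasSubset.Subset.eventuallyLE hsub3)
      rw [integral_ball_rpow N hN1 hlam₁ h3r] at step1
      refine step1.trans ?_
      have e1 : (3 * r) ^ ((N:ℝ) + lam) = 3 ^ (N:ℝ) * r ^ N * (3 * r) ^ lam := by
        rw [Real.rpow_add h3r]
        congr 1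
        rw [Real.mul_rpow (by norm_num) hr.le, Real.rpow_natCast, Real.rpow_natCast]
      have e2 : (3 * r) ^ lam ≤ (‖x‖ + r) ^ lam :=
        Real.rpow_le_rpow_of_nonpos hxr (by linarith) hlam₂
      have h31 : (1:ℝ) ≤ 3 ^ (-lam) := by
        rw [show (1:ℝ) = 3 ^ (0:ℝ) by simp]
        exact Real.rpow_le_rpow_of_exponent_le (by norm_num) (by linarith)
      calc C * (3 * r) ^ ((N:ℝ) + lam)
          = (C * 3 ^ (N:ℝ)) * (r ^ N * (3 * r) ^ lam) := by rw [e1]; ring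
        _ ≤ (C * 3 ^ (N:ℝ)) * (r ^ N * (‖x‖ + r) ^ lam) := by
            apply mul_le_mul_of_nonneg_left
              (mul_le_mul_of_nonneg_left e2 (by positivity)) (by positivity)
        _ ≤ (v * 3 ^ (-lam) + C * 3 ^ (N:ℝ) * 3 ^ (-lam)) * r ^ N * (‖x‖ + r) ^ lam := by
            have hkey : C * 3 ^ (N:ℝ) ≤ v * 3 ^ (-lam) + C * 3 ^ (N:ℝ) * 3 ^ (-lam) := by
              have h3N : (0:ℝ) < 3 ^ (N:ℝ) := Real.rpow_pos_of_pos (by norm_num) _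
              have hvpos : (0:ℝ) ≤ v * 3 ^ (-lam) := by positivity
              nlinarith [h31, mul_pos hC0 h3N, hvpos]
            have hXnn : 0 ≤ r ^ N * (‖x‖ + r) ^ lam := by positivity
            calc (C * 3 ^ (N:ℝ)) * (r ^ N * (‖x‖ + r) ^ lam)
                ≤ (v * 3 ^ (-lam) + C * 3 ^ (N:ℝ) * 3 ^ (-lam)) * (r ^ N * (‖x‖ + r) ^ lam) :=
                  mul_le_mul_of_nonneg_right hkey hXnn
              _ = _ := by ring
    · -- far-from-origin case
      have hb : ∀ y ∈ Metric.ball x r, ‖y‖ ^ lam ≤ 3 ^ (-lam) * (‖x‖ + r) ^ lam := by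
        intro y hy
        have h1 : dist y x < r := Metric.mem_ball.1 hy
        have h2 := norm_sub_norm_le x y
        rw [← dist_eq_norm, dist_comm] at h2
        have hy1 : (‖x‖ + r) / 3 ≤ ‖y‖ := by linarith
        have hy0 : 0 < (‖x‖ + r) / 3 := by positivity
        refine (Real.rpow_le_rpow_of_nonpos hy0 hy1 hlam₂).trans (le_of_eq ?_)
        rw [Real.div_rpow hxr.le (by norm_num), Real.rpow_neg (by norm_num), div_eq_mul_inv,
          mul_comm]
      calc ∫ y in Metric.ball x r, ‖y‖ ^ lam
          ≤ ∫ _y in Metric.ball x r, 3 ^ (-lam) * (‖x‖ + r) ^ lam :=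
            setIntegral_mono_on hInt (integrableOn_const measure_ball_lt_top.ne)
              measurableSet_ball hb
        _ = (r ^ N * v) * (3 ^ (-lam) * (‖x‖ + r) ^ lam) := by
            rw [setIntegral_const, measureReal_def, hvol, smul_eq_mul]
        _ ≤ (v * 3 ^ (-lam) + C * 3 ^ (N:ℝ) * 3 ^ (-lam)) * r ^ N * (‖x‖ + r) ^ lam := by
            have hnn : 0 ≤ C * 3 ^ (N:ℝ) * 3 ^ (-lam) * (r ^ N * (‖x‖ + r) ^ lam) := by
              positivity
            nlinarith [hnn]
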